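/- The following data form a category: objects are the natural numbers; a morphism m → n is a pair (s, g) of a permutation s of Fin m and a monotone function g : Fin m → Fin n; the identity on m is (id, id); and the composite of (s₁, g₁) : m → n with (s₂, g₂) : n → o is ((s₂)^{g₁} ∘ s₁, g₂ ∘ (g₁)_{s₂}), using the distributive-law notation. That is, this composition is associative and unital. Moreover, the assignment (s, g) ↦ g ∘ s : Fin m → Fin n is compatible with these compositions and identities, i.e. it defines a functor from this category to the category whose objects are natural numbers and whose morphisms m → n are all functions Fin m → Fin n. -/

import Mathlib

/-- A permutation `σ` of `Fin m` is increasing on the fibers of `f : Fin m → Fin n` if for all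
`x, y : Fin m` with `f x = f y` and `x < y` one has `σ x < σ y`. -/
def IncreasingOnFibers {m n : ℕ} (σ : Equiv.Perm (Fin m)) (f : Fin m → Fin n) : Prop :=
  ∀ x y : Fin m, f x = f y → x < y → σ x < σ y

/-- A morphism `m → n` of the category `SΔ`: a pair `(s, g)` of a permutation `s` of `Fin m`
and a monotone function `g : Fin m → Fin n`. -/
def SDMor (m n : ℕ) : Type :=
  Equiv.Perm (Fin m) × {g : Fin m → Fin n // Monotone g}

/-- The type of a distributive law: to each monotone `f : Fin m → Fin n` and permutation `s` of
`Fin n` it assigns the pair `(f_s, s^f)`. -/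
def DistLaw : Type :=
  ∀ {m n : ℕ} (f : Fin m → Fin n), Monotone f → Equiv.Perm (Fin n) →
    (Fin m → Fin n) × Equiv.Perm (Fin m)

/-- The defining property of the distributive law: `f_s` is monotone, `s^f` is increasing on
the fibers of `f`, and `s ∘ f = f_s ∘ s^f`. -/
def IsDistLaw (D : DistLaw) : Prop :=
  ∀ {m n : ℕ} (f : Fin m → Fin n) (hf : Monotone f) (s : Equiv.Perm (Fin n)),
    Monotone (D f hf s).1 ∧ IncreasingOnFibers (D f hf s).2 f ∧
      ⇑s ∘ f = (D f hf s).1 ∘ ⇑(D f hf s).2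

/-- The identity morphism `(id, id)` of `SΔ` on `m`. -/
def SDid (m : ℕ) : SDMor m m := ⟨1, ⟨id, monotone_id⟩⟩

/-- The composite of `(s₁, g₁) : m → n` with `(s₂, g₂) : n → o` in `SΔ`, defined through the
distributive law: `((s₂)^{g₁} ∘ s₁, g₂ ∘ (g₁)_{s₂})`. -/
def SDcomp (D : DistLaw) (hD : IsDistLaw D) {m n o : ℕ} (a : SDMor m n) (b : SDMor n o) :
    SDMor m o :=
  ⟨(D a.2.1 a.2.2 b.1).2 * a.1,
    ⟨b.2.1 ∘ (D a.2.1 a.2.2 b.1).1, b.2.2.comp (hD a.2.1 a.2.2 b.1).1⟩⟩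

/-- The underlying function `Fin m → Fin n` of a morphism `(s, g)` of `SΔ`, namely `g ∘ s`. -/
def SDreal {m n : ℕ} (a : SDMor m n) : Fin m → Fin n := a.2.1 ∘ ⇑a.1


lemma lower_mem_iff {m : ℕ} (S : Finset (Fin m))
    (hS : ∀ x y : Fin m, x ≤ y → y ∈ S → x ∈ S) (x : Fin m) :
    x ∈ S ↔ (x : ℕ) < S.card := by
  constructor
  · intro hx
    by_contra h
    push_neg at h
    have hsub : Finset.Iic x ⊆ S := fun y hy => hS y x (Finset.mem_Iic.mp hy) hx
    have hc := Finset.card_le_card hsub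
    rw [Fin.card_Iic] at hc
    omega
  · intro hx
    by_contra hxS
    have hsub : S ⊆ Finset.Iio x := by
      intro y hy
      rw [Finset.mem_Iio]
      rcases lt_or_ge y x with h | h
      · exact h
      · exact absurd (hS x y h hy) hxS
    have hc := Finset.card_le_card hsub
    rw [Fin.card_Iio] at hc
    omega

lemma mono_eq {m n : ℕ} {g₁ g₂ : Fin m → Fin n} (h₁ : Monotone g₁) (h₂ : Monotone g₂)
    (σ₁ σ₂ : Equiv.Perm (Fin m)) (h : g₁ ∘ ⇑σ₁ = g₂ ∘ ⇑σ₂) : g₁ = g₂ := by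
  have key : ∀ (g : Fin m → Fin n) (σ : Equiv.Perm (Fin m)) (j : Fin n),
      (Finset.univ.filter (fun x => g (σ x) ≤ j)).card
        = (Finset.univ.filter (fun x => g x ≤ j)).card := by
    intro g σ j
    apply Finset.card_equiv σ
    intro i
    simp
  have hiff : ∀ (j : Fin n) (x : Fin m), g₁ x ≤ j ↔ g₂ x ≤ j := by
    intro j x
    have low₁ : ∀ a b : Fin m, a ≤ b → b ∈ Finset.univ.filter (fun x => g₁ x ≤ j) →
        a ∈ Finset.univ.filter (fun x => g₁ x ≤ j) := by
      intro a b hab hb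
      simp only [Finset.mem_filter, Finset.mem_univ, true_and] at hb ⊢
      exact le_trans (h₁ hab) hb
    have low₂ : ∀ a b : Fin m, a ≤ b → b ∈ Finset.univ.filter (fun x => g₂ x ≤ j) →
        a ∈ Finset.univ.filter (fun x => g₂ x ≤ j) := by
      intro a b hab hb
      simp only [Finset.mem_filter, Finset.mem_univ, true_and] at hb ⊢
      exact le_trans (h₂ hab) hb
    have hcard : (Finset.univ.filter (fun x => g₁ x ≤ j)).card
        = (Finset.univ.filter (fun x => g₂ x ≤ j)).card := by
      rw [← key g₁ σ₁, ← key g₂ σ₂]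
      congr 1
      apply Finset.filter_congr
      intro i _
      rw [show g₁ (σ₁ i) = g₂ (σ₂ i) from congrFun h i]
    have c1 := lower_mem_iff _ low₁ x
    have c2 := lower_mem_iff _ low₂ x
    simp only [Finset.mem_filter, Finset.mem_univ, true_and] at c1 c2
    rw [c1, c2, hcard]
  funext x
  exact le_antisymm ((hiff (g₂ x) x).mpr le_rfl) ((hiff (g₁ x) x).mp le_rfl)

lemma perm_uniq {m n : ℕ} (f : Fin m → Fin n) (s : Equiv.Perm (Fin n))
    (g : Fin m → Fin n) {σ₁ σ₂ : Equiv.Perm (Fin m)}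
    (hσ₁ : IncreasingOnFibers σ₁ f) (hσ₂ : IncreasingOnFibers σ₂ f)
    (e₁ : ⇑s ∘ f = g ∘ ⇑σ₁) (e₂ : ⇑s ∘ f = g ∘ ⇑σ₂) : σ₁ = σ₂ := by
  apply Equiv.ext
  intro x₀
  set A : Finset (Fin m) := Finset.univ.filter (fun x => f x = f x₀) with hA
  set B : Finset (Fin m) := Finset.univ.filter (fun y => g y = s (f x₀)) with hB
  have key : ∀ (σ : Equiv.Perm (Fin m)), IncreasingOnFibers σ f → ⇑s ∘ f = g ∘ ⇑σ →
      ∃ h : B.card = A.card, ∀ i : Fin A.card, σ ((A.orderIsoOfFin rfl) i) = (B.orderEmbOfFin h) i := by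
    intro σ hσ e
    have himg : A.image ⇑σ = B := by
      ext y
      simp only [hA, hB, Finset.mem_image, Finset.mem_filter, Finset.mem_univ, true_and]
      constructor
      · rintro ⟨x, hx, rfl⟩
        have := congrFun e x
        simp only [Function.comp_apply] at this
        rw [← this, hx]
      · intro hy
        refine ⟨σ.symm y, ?_, σ.apply_symm_apply y⟩
        have := congrFun e (σ.symm y)
        simp only [Function.comp_apply, σ.apply_symm_apply] at this
        rw [hy] at this
        exact s.injective this
    have hcard : B.card = A.card := by
      rw [← himg, Finset.card_image_of_injective _ σ.injective]
    refine ⟨hcard, ?_⟩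
    have hmem : ∀ i : Fin A.card, σ ((A.orderIsoOfFin rfl) i) ∈ B := by
      intro i
      rw [← himg]
      exact Finset.mem_image_of_mem _ ((A.orderIsoOfFin rfl) i).2
    have hmono : StrictMono (fun i : Fin A.card => σ ((A.orderIsoOfFin rfl) i)) := by
      intro i j hij
      have h1 := (A.orderIsoOfFin rfl).strictMono hij
      have m1 : ((A.orderIsoOfFin rfl) i : Fin m) ∈ A := ((A.orderIsoOfFin rfl) i).2
      have m2 : ((A.orderIsoOfFin rfl) j : Fin m) ∈ A := ((A.orderIsoOfFin rfl) j).2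
      simp only [hA, Finset.mem_filter, Finset.mem_univ, true_and] at m1 m2
      exact hσ _ _ (m1.trans m2.symm) h1
    have := Finset.orderEmbOfFin_unique hcard hmem hmono
    exact fun i => congrFun this i
  obtain ⟨hc1, h1⟩ := key σ₁ hσ₁ e₁
  obtain ⟨hc2, h2⟩ := key σ₂ hσ₂ e₂
  have hx₀ : x₀ ∈ A := by simp [hA]
  set i := (A.orderIsoOfFin rfl).symm ⟨x₀, hx₀⟩ with hi
  have hxi : ((A.orderIsoOfFin rfl) i : Fin m) = x₀ := by
    rw [hi, OrderIso.apply_symm_apply]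
  calc σ₁ x₀ = σ₁ ((A.orderIsoOfFin rfl) i) := by rw [hxi]
    _ = (B.orderEmbOfFin hc1) i := h1 i
    _ = (B.orderEmbOfFin hc2) i := by congr 1
    _ = σ₂ ((A.orderIsoOfFin rfl) i) := (h2 i).symm
    _ = σ₂ x₀ := by rw [hxi]

lemma D_uniq (D : DistLaw) (hD : IsDistLaw D) {m n : ℕ} (f : Fin m → Fin n) (hf : Monotone f)
    (s : Equiv.Perm (Fin n)) (G : Fin m → Fin n) (T : Equiv.Perm (Fin m))
    (hG : Monotone G) (hT : IncreasingOnFibers T f) (hc : ⇑s ∘ f = G ∘ ⇑T) :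
    D f hf s = (G, T) := by
  obtain ⟨h1, h2, h3⟩ := hD f hf s
  have hg : (D f hf s).1 = G := mono_eq h1 hG (D f hf s).2 T (h3.symm.trans hc)
  have hσ : (D f hf s).2 = T := perm_uniq f s G h2 hT (hg ▸ h3) hc
  exact Prod.ext hg hσ

lemma SDMor_ext {m n : ℕ} {a b : SDMor m n} (h1 : a.1 = b.1) (h2 : a.2.1 = b.2.1) : a = b := by
  obtain ⟨a1, a2⟩ := a
  obtain ⟨b1, b2⟩ := b
  simp only at h1 h2
  cases h1
  exact congrArg _ (Subtype.ext h2)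

/-- Objects the natural numbers, morphisms `m → n` the pairs `(s, g)` of a permutation `s` of
`Fin m` and a monotone `g : Fin m → Fin n`, identity `(id, id)`, and composition defined via
the distributive law as `((s₂)^{g₁} ∘ s₁, g₂ ∘ (g₁)_{s₂})`, form a category: composition is
associative and unital.  Moreover `(s, g) ↦ g ∘ s` is compatible with composition and
identities, i.e. it defines a functor to the category of the natural numbers with all
functions `Fin m → Fin n` as morphisms. -/
theorem stmt_16 (D : DistLaw) (hD : IsDistLaw D) :
    (∀ (m n o q : ℕ) (a : SDMor m n) (b : SDMor n o) (c : SDMor o q),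
        SDcomp D hD (SDcomp D hD a b) c = SDcomp D hD a (SDcomp D hD b c)) ∧
    (∀ (m n : ℕ) (a : SDMor m n), SDcomp D hD (SDid m) a = a ∧ SDcomp D hD a (SDid n) = a) ∧
    (∀ (m n o : ℕ) (a : SDMor m n) (b : SDMor n o),
        SDreal (SDcomp D hD a b) = SDreal b ∘ SDreal a) ∧
    (∀ m : ℕ, SDreal (SDid m) = id) := by
  refine ⟨?_, ?_, ?_, ?_⟩
  · -- associativity
    intro m n o q a b c
    obtain ⟨s₁, g₁, hg₁⟩ := a
    obtain ⟨s₂, g₂, hg₂⟩ := b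
    obtain ⟨s₃, g₃, hg₃⟩ := c
    obtain ⟨hF₁m, hσf, hc₁⟩ := hD g₁ hg₁ s₂
    obtain ⟨hF₂m, hT₂f, hc₂⟩ := hD g₂ hg₂ s₃
    obtain ⟨hF'm, hτf, hc'⟩ := hD g₁ hg₁ ((D g₂ hg₂ s₃).2 * s₂)
    -- key uniqueness step
    have hT : IncreasingOnFibers
        ((D g₁ hg₁ ((D g₂ hg₂ s₃).2 * s₂)).2 * (D g₁ hg₁ s₂).2⁻¹)
        (g₂ ∘ (D g₁ hg₁ s₂).1) := by
      intro X Y hXY hlt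
      simp only [Equiv.Perm.mul_apply] at *
      set u := (D g₁ hg₁ s₂).2⁻¹ X with hu
      set v := (D g₁ hg₁ s₂).2⁻¹ Y with hv
      have hσu : (D g₁ hg₁ s₂).2 u = X := by rw [hu]; exact Equiv.apply_symm_apply _ X
      have hσv : (D g₁ hg₁ s₂).2 v = Y := by rw [hv]; exact Equiv.apply_symm_apply _ Y
      have heu : s₂ (g₁ u) = (D g₁ hg₁ s₂).1 X := by
        have := congrFun hc₁ u; simp only [Function.comp_apply, hσu] at this; exact this
      have hev : s₂ (g₁ v) = (D g₁ hg₁ s₂).1 Y := by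
        have := congrFun hc₁ v; simp only [Function.comp_apply, hσv] at this; exact this
      have hXY' : g₂ ((D g₁ hg₁ s₂).1 X) = g₂ ((D g₁ hg₁ s₂).1 Y) := hXY
      by_cases hguv : g₁ u = g₁ v
      · have huv : u < v := by
          rcases lt_trichotomy u v with h | h | h
          · exact h
          · exact absurd (show X = Y by rw [← hσu, ← hσv, h]) (ne_of_lt hlt)
          · have hYX := hσf v u hguv.symm h
            rw [hσu, hσv] at hYX
            exact absurd hYX (not_lt.mpr hlt.le)
        exact hτf u v hguv huv
      · have hne : (D g₁ hg₁ s₂).1 X ≠ (D g₁ hg₁ s₂).1 Y := by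
          intro h
          exact hguv (s₂.injective (by rw [heu, hev, h]))
        have hlt' : (D g₁ hg₁ s₂).1 X < (D g₁ hg₁ s₂).1 Y :=
          lt_of_le_of_ne (hF₁m hlt.le) hne
        have hTlt := hT₂f _ _ hXY' hlt'
        rw [← heu, ← hev] at hTlt
        have h2 : ((D g₂ hg₂ s₃).2 * s₂) (g₁ u) < ((D g₂ hg₂ s₃).2 * s₂) (g₁ v) := by
          simpa [Equiv.Perm.mul_apply] using hTlt
        have e1 := congrFun hc' u
        have e2 := congrFun hc' v
        simp only [Function.comp_apply] at e1 e2
        rw [e1, e2] at h2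
        exact hF'm.reflect_lt h2
    have hcomm : ⇑s₃ ∘ (g₂ ∘ (D g₁ hg₁ s₂).1)
        = ((D g₂ hg₂ s₃).1 ∘ (D g₁ hg₁ ((D g₂ hg₂ s₃).2 * s₂)).1)
          ∘ ⇑((D g₁ hg₁ ((D g₂ hg₂ s₃).2 * s₂)).2 * (D g₁ hg₁ s₂).2⁻¹) := by
      funext Y
      set u := (D g₁ hg₁ s₂).2⁻¹ Y with hu
      have hσu : (D g₁ hg₁ s₂).2 u = Y := Equiv.apply_symm_apply _ Y
      have heu : s₂ (g₁ u) = (D g₁ hg₁ s₂).1 Y := by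
        have := congrFun hc₁ u; simp only [Function.comp_apply, hσu] at this; exact this
      have h2 := congrFun hc₂ (s₂ (g₁ u))
      have h3 := congrFun hc' u
      simp only [Function.comp_apply, Equiv.Perm.mul_apply] at h2 h3 ⊢
      rw [← heu, h2]
      rw [h3]
    have key := D_uniq D hD (g₂ ∘ (D g₁ hg₁ s₂).1) (hg₂.comp hF₁m) s₃
      ((D g₂ hg₂ s₃).1 ∘ (D g₁ hg₁ ((D g₂ hg₂ s₃).2 * s₂)).1)
      ((D g₁ hg₁ ((D g₂ hg₂ s₃).2 * s₂)).2 * (D g₁ hg₁ s₂).2⁻¹)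
      (hF₂m.comp hF'm) hT hcomm
    apply SDMor_ext
    · show (D (g₂ ∘ (D g₁ hg₁ s₂).1) (hg₂.comp hF₁m) s₃).2 * ((D g₁ hg₁ s₂).2 * s₁)
        = (D g₁ hg₁ ((D g₂ hg₂ s₃).2 * s₂)).2 * s₁
      rw [show (D (g₂ ∘ (D g₁ hg₁ s₂).1) (hg₂.comp hF₁m) s₃).2
          = (D g₁ hg₁ ((D g₂ hg₂ s₃).2 * s₂)).2 * (D g₁ hg₁ s₂).2⁻¹ from congrArg Prod.snd key]
      group
    · show g₃ ∘ (D (g₂ ∘ (D g₁ hg₁ s₂).1) (hg₂.comp hF₁m) s₃).1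
        = (g₃ ∘ (D g₂ hg₂ s₃).1) ∘ (D g₁ hg₁ ((D g₂ hg₂ s₃).2 * s₂)).1
      rw [show (D (g₂ ∘ (D g₁ hg₁ s₂).1) (hg₂.comp hF₁m) s₃).1
          = (D g₂ hg₂ s₃).1 ∘ (D g₁ hg₁ ((D g₂ hg₂ s₃).2 * s₂)).1 from congrArg Prod.fst key]
      rfl
  · -- unit laws
    intro m n a
    obtain ⟨s, g, hg⟩ := a
    constructor
    · have kid : D (id : Fin m → Fin m) monotone_id s = (id, s) := by
        apply D_uniq D hD
        · exact monotone_id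
        · intro x y hxy hlt
          exact absurd hxy (ne_of_lt hlt)
        · rfl
      apply SDMor_ext
      · show (D (id : Fin m → Fin m) monotone_id s).2 * 1 = s
        rw [show (D (id : Fin m → Fin m) monotone_id s).2 = s from congrArg Prod.snd kid,
          mul_one]
      · show g ∘ (D (id : Fin m → Fin m) monotone_id s).1 = g
        rw [show (D (id : Fin m → Fin m) monotone_id s).1 = id from congrArg Prod.fst kid]
        rfl
    · have kone : D g hg (1 : Equiv.Perm (Fin n)) = (g, 1) := by
        apply D_uniq D hD
        · exact hg
        · intro x y _ hlt
          simpa using hlt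
        · rfl
      apply SDMor_ext
      · show (D g hg (1 : Equiv.Perm (Fin n))).2 * s = s
        rw [show (D g hg (1 : Equiv.Perm (Fin n))).2 = 1 from congrArg Prod.snd kone, one_mul]
      · show id ∘ (D g hg (1 : Equiv.Perm (Fin n))).1 = g
        rw [show (D g hg (1 : Equiv.Perm (Fin n))).1 = g from congrArg Prod.fst kone]
        rfl
  · -- functoriality on composition
    intro m n o a b
    obtain ⟨s₁, g₁, hg₁⟩ := a
    obtain ⟨s₂, g₂, hg₂⟩ := b
    funext x
    have h := congrFun (hD g₁ hg₁ s₂).2.2 (s₁ x)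
    simp only [Function.comp_apply] at h
    show g₂ ((D g₁ hg₁ s₂).1 (((D g₁ hg₁ s₂).2 * s₁) x)) = g₂ (s₂ (g₁ (s₁ x)))
    rw [Equiv.Perm.mul_apply, ← h]
  · -- identities
    intro m
    rfl
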